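/- Let β ∈ [0,1) and Γ ≥ 1 be real scalars, and let K be an integer with K ≥ (2^(1/(1-β)) - 1)·Γ. Then (K+Γ)^(1-β)/(2(1-β)) ≤ ∑_{k=0}^{K} (k+Γ)^(-β) ≤ (K+Γ)^(1-β)/(1-β). -/

import Mathlib

open MeasureTheory intervalIntegral

theorem stmt_0 (β Γ : ℝ) (hβ0 : 0 ≤ β) (hβ1 : β < 1) (hΓ : 1 ≤ Γ)
    (K : ℕ) (hK : ((2:ℝ) ^ ((1:ℝ)/(1-β)) - 1) * Γ ≤ K) :
    ((K:ℝ) + Γ) ^ (1-β) / (2*(1-β)) ≤ (∑ k ∈ Finset.range (K+1), ((k : ℝ) + Γ) ^ (-β)) ∧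
    (∑ k ∈ Finset.range (K+1), ((k : ℝ) + Γ) ^ (-β)) ≤ ((K:ℝ) + Γ) ^ (1-β) / (1-β) := by
  have h1β : 0 < 1 - β := by linarith
  have hΓ0 : (0:ℝ) < Γ := by linarith
  set f : ℝ → ℝ := fun x => (x + Γ) ^ (-β) with hf
  have hanti : ∀ n : ℕ, AntitoneOn f (Set.Icc (0:ℝ) (0 + n)) := by
    intro n x hx y hy hxy
    exact Real.rpow_le_rpow_of_nonpos (by linarith [hx.1]) (by linarith) (by linarith)
  -- integral formula
  have hint : ∀ n : ℕ, (∫ x in (0:ℝ)..(0 + n), f x)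
      = (((n:ℝ) + Γ) ^ (1-β) - Γ ^ (1-β)) / (1-β) := by
    intro n
    have : (∫ x in (0:ℝ)..(0 + n), f x) = ∫ x in (0+Γ)..((0:ℝ)+n+Γ), x ^ (-β) := by
      rw [← intervalIntegral.integral_comp_add_right (fun x => x ^ (-β)) Γ]
    rw [this, integral_rpow (Or.inl (by linarith))]
    have : -β + 1 = 1 - β := by ring
    rw [this]
    norm_num
  constructor
  · -- lower bound
    have hs := (hanti (K+1)).integral_le_sum
    rw [hint (K+1)] at hs
    have hsum : ∑ i ∈ Finset.range (K+1), f (0 + (i:ℝ))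
        = ∑ k ∈ Finset.range (K+1), ((k : ℝ) + Γ) ^ (-β) := by
      apply Finset.sum_congr rfl; intro i _; simp [hf]
    rw [hsum] at hs
    refine le_trans ?_ hs
    rw [div_le_div_iff₀ (by positivity) h1β]
    -- need: (K+Γ)^(1-β)*(1-β) ≤ ((K+1+Γ)^(1-β) - Γ^(1-β)) * (2(1-β))
    have hmono : ((K:ℝ) + Γ) ^ (1-β) ≤ ((K:ℝ)+1+Γ) ^ (1-β) :=
      Real.rpow_le_rpow (by positivity) (by linarith) h1β.le
    have hkey : 2 * Γ ^ (1-β) ≤ ((K:ℝ) + Γ) ^ (1-β) := by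
      have h2 : (2:ℝ) ^ ((1:ℝ)/(1-β)) * Γ ≤ (K:ℝ) + Γ := by nlinarith
      calc 2 * Γ ^ (1-β) = ((2:ℝ) ^ ((1:ℝ)/(1-β)) * Γ) ^ (1-β) := by
            rw [Real.mul_rpow (by positivity) hΓ0.le, ← Real.rpow_mul (by norm_num),
              one_div, inv_mul_cancel₀ h1β.ne', Real.rpow_one]
        _ ≤ ((K:ℝ) + Γ) ^ (1-β) := Real.rpow_le_rpow (by positivity) h2 h1β.le
    push_cast
    nlinarith
  · -- upper bound
    have hs := (hanti K).sum_le_integral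
    rw [hint K] at hs
    have hsum : ∑ i ∈ Finset.range K, f (0 + ((i:ℕ)+1 : ℕ))
        = ∑ k ∈ Finset.range K, (((k:ℝ)+1) + Γ) ^ (-β) := by
      apply Finset.sum_congr rfl; intro i _; push_cast; ring_nf; rfl
    rw [hsum] at hs
    have hsplit : ∑ k ∈ Finset.range (K+1), ((k : ℝ) + Γ) ^ (-β)
        = Γ ^ (-β) + ∑ k ∈ Finset.range K, (((k:ℝ)+1) + Γ) ^ (-β) := by
      rw [Finset.sum_range_succ', add_comm]
      congr 1
      · norm_num
      · exact Finset.sum_congr rfl fun i _ => by push_cast; ring_nf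
    rw [hsplit]
    have hΓb : Γ ^ (-β) * (1-β) ≤ Γ ^ (1-β) := by
      have : Γ ^ (1-β) = Γ ^ (-β) * Γ := by
        rw [← Real.rpow_add_one hΓ0.ne']; ring_nf
      rw [this]
      have : (0:ℝ) < Γ ^ (-β) := by positivity
      nlinarith
    rw [div_eq_mul_inv] at *
    calc Γ ^ (-β) + ∑ k ∈ Finset.range K, (((k:ℝ)+1) + Γ) ^ (-β)
        ≤ Γ ^ (-β) + (((K:ℝ) + Γ) ^ (1-β) - Γ ^ (1-β)) * (1-β)⁻¹ := by linarith
      _ ≤ ((K:ℝ) + Γ) ^ (1-β) * (1-β)⁻¹ := by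
          rw [← sub_nonneg]
          have h1 : (0:ℝ) < (1-β)⁻¹ := by positivity
          have : ((K:ℝ) + Γ) ^ (1-β) * (1-β)⁻¹ - (Γ ^ (-β) + (((K:ℝ) + Γ) ^ (1-β) - Γ ^ (1-β)) * (1-β)⁻¹)
              = (Γ ^ (1-β) - Γ ^ (-β) * (1-β)) * (1-β)⁻¹ := by
            field_simp; ring
          rw [this]
          exact mul_nonneg (by linarith) h1.le
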